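/- Define extended Stirling numbers for all integers n and k as follows: s(n,k) := (−1)^{n−k} · e_{n−k}(1, 2, …, n−1) if n ≥ 0, and s(n,k) := h_{n−k}(−1, −2, …, n) if n < 0; S(n,k) := h_{n−k}(1, 2, …, k) if k ≥ 0, and S(n,k) := (−1)^{n−k} · e_{n−k}(−1, −2, …, k+1) if k < 0 (so both vanish whenever the degree n−k is negative or, in the elementary case, exceeds the number of variables). Then for all integers n and k, S(n, k) = (−1)^{n+k} · s(−k, −n). -/

import Mathlib

set_option maxRecDepth 4000


/-- `h_n(B)`: the complete homogeneous symmetric function of degree `n` in the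
elements of the multiset `B`, defined as the coefficient of `t^n` in
`∏_{b ∈ B} (1 + b t + b² t² + ⋯) = ∏_{b ∈ B} 1/(1 - b t)`. -/
noncomputable def hsymmM {R : Type*} [CommRing R] (B : Multiset R) (n : ℕ) : R :=
  PowerSeries.coeff n ((B.map fun b => PowerSeries.mk fun k => b ^ k).prod)

/-- `e_k(A)`: the elementary symmetric function of degree `k` in the elements of
the multiset `A`. -/
def esymmM {R : Type*} [CommRing R] (A : Multiset R) (k : ℕ) : R :=
  ((A.powersetCard k).map Multiset.prod).sum

/-- The complementary symmetric function `comp_n(A;B) = ∑_{j=0}^n (-1)^j e_j(A) h_{n-j}(B)`. -/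
noncomputable def compM {R : Type*} [CommRing R] (A B : Multiset R) (n : ℕ) : R :=
  ∑ j ∈ Finset.range (n + 1), (-1 : R) ^ j * esymmM A j * hsymmM B (n - j)


lemma esymmM_neg {R : Type*} [CommRing R] (A : Multiset R) (d : ℕ) :
    esymmM (A.map fun a => -a) d = (-1) ^ d * esymmM A d := by
  unfold esymmM
  rw [Multiset.powersetCard_map, Multiset.map_map, Multiset.sum_map_mul_left.symm]
  congr 1
  apply Multiset.map_congr rfl
  intro s hs
  have hc : Multiset.card s = d := (Multiset.mem_powersetCard.mp hs).2
  simp [Multiset.prod_map_neg, hc]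

lemma hsymmM_neg {R : Type*} [CommRing R] (B : Multiset R) (d : ℕ) :
    hsymmM (B.map fun b => -b) d = (-1) ^ d * hsymmM B d := by
  unfold hsymmM
  have h1 : ((B.map fun b => -b).map fun b => PowerSeries.mk fun k => b ^ k) =
      B.map fun b => PowerSeries.rescale (-1) (PowerSeries.mk fun k => b ^ k) := by
    rw [Multiset.map_map]
    apply Multiset.map_congr rfl
    intro b _
    ext m
    simp only [Function.comp_apply]
    rw [PowerSeries.coeff_rescale, PowerSeries.coeff_mk, PowerSeries.coeff_mk, neg_pow,
      mul_comm]
  rw [h1]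
  rw [show (B.map fun b => PowerSeries.rescale (-1) (PowerSeries.mk fun k => b ^ k)).prod
      = PowerSeries.rescale (-1) (B.map fun b => PowerSeries.mk fun k => b ^ k).prod by
    rw [map_multiset_prod, Multiset.map_map]; rfl]
  rw [PowerSeries.coeff_rescale]

lemma hsymmM_zero {R : Type*} [CommRing R] (d : ℕ) :
    hsymmM (0 : Multiset R) d = if d = 0 then 1 else 0 := by
  unfold hsymmM
  simp [PowerSeries.coeff_one]

lemma esymmM_zero {R : Type*} [CommRing R] (d : ℕ) :
    esymmM (0 : Multiset R) d = if d = 0 then 1 else 0 := by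
  unfold esymmM
  cases d with
  | zero => simp
  | succ m => simp [Multiset.powersetCard_zero_right]

lemma parity_aux (n k : ℤ) (h : 0 ≤ n - k) :
    ((-1 : ℤ)) ^ (n + k).natAbs = (-1) ^ (n - k).toNat := by
  have h1 : ((n - k).toNat : ℤ) = n - k := Int.toNat_of_nonneg h
  have hiff : Even (n + k) ↔ Even (n - k) := by
    constructor <;> intro he
    · have := he.sub (even_two_mul k); simpa [two_mul, sub_sub] using this
    · have := he.add (even_two_mul k); have h2 : n - k + 2 * k = n + k := by ring
      rwa [h2] at this
  rcases Int.even_or_odd (n + k) with he | ho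
  · rw [(Int.natAbs_even.mpr he).neg_one_pow]
    have : Even ((n - k).toNat) := by
      rw [← Int.even_coe_nat, h1]; exact hiff.mp he
    rw [this.neg_one_pow]
  · rw [(Int.natAbs_odd.mpr ho).neg_one_pow]
    have : Odd ((n - k).toNat) := by
      rw [← Int.odd_coe_nat, h1]
      rw [← Int.not_even_iff_odd] at ho ⊢; exact fun c => ho (hiff.mpr c)
    rw [this.neg_one_pow]


/-- Extended Stirling numbers of the first kind for all integers `n, k`:
`s(n,k) = (-1)^{n-k} e_{n-k}(1, 2, …, n-1)` for `n ≥ 0` and `s(n,k) = h_{n-k}(-1, -2, …, n)`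
for `n < 0`, vanishing when the degree `n - k` is negative. -/
noncomputable def sExt (n k : ℤ) : ℤ :=
  if n - k < 0 then 0
  else if 0 ≤ n then
    (-1) ^ (n - k).toNat *
      esymmM ((Multiset.range (n - 1).toNat).map fun j => ((j : ℤ) + 1)) (n - k).toNat
  else
    hsymmM ((Multiset.range (-n).toNat).map fun j => -((j : ℤ) + 1)) (n - k).toNat

/-- Extended Stirling numbers of the second kind for all integers `n, k`:
`S(n,k) = h_{n-k}(1, 2, …, k)` for `k ≥ 0` and `S(n,k) = (-1)^{n-k} e_{n-k}(-1, -2, …, k+1)`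
for `k < 0`, vanishing when the degree `n - k` is negative. -/
noncomputable def SExt (n k : ℤ) : ℤ :=
  if n - k < 0 then 0
  else if 0 ≤ k then
    hsymmM ((Multiset.range k.toNat).map fun j => ((j : ℤ) + 1)) (n - k).toNat
  else
    (-1) ^ (n - k).toNat *
      esymmM ((Multiset.range (-k - 1).toNat).map fun j => -((j : ℤ) + 1)) (n - k).toNat

/-- The duality `S(n,k) = (-1)^{n+k} s(-k,-n)` between the extended Stirling numbers
of the first and second kind. -/
theorem stmt19 (n k : ℤ) :
    SExt n k = (-1) ^ (n + k).natAbs * sExt (-k) (-n) := by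
  unfold SExt sExt
  have hd : -k - -n = n - k := by ring
  rw [hd]
  by_cases h : n - k < 0
  · simp [h]
  · push_neg at h
    set d := (n - k).toNat with hdd
    have hsign : ((-1 : ℤ)) ^ (n + k).natAbs = (-1) ^ d := parity_aux n k h
    rw [if_neg (not_lt.mpr h), if_neg (not_lt.mpr h), hsign]
    by_cases hk : 0 ≤ k
    · rw [if_pos hk]
      rcases eq_or_lt_of_le hk with heq | hpos
      · have hk0 : k = 0 := heq.symm
        subst hk0
        rw [if_pos (by norm_num : (0:ℤ) ≤ -0)]
        have ht : ((-1 : ℤ)).toNat = 0 := rfl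
        by_cases h0 : d = 0 <;>
          norm_num [h0, ht, hsymmM_zero, esymmM_zero]
      · have hnk : ¬ (0 ≤ -k) := by omega
        rw [if_neg hnk]
        have hms : ((Multiset.range (- -k).toNat).map fun j => -((j : ℤ) + 1)) =
            ((Multiset.range k.toNat).map fun j => ((j : ℤ) + 1)).map fun a => -a := by
          rw [Multiset.map_map]
          simp
        rw [hms, hsymmM_neg, ← mul_assoc, ← mul_pow]
        norm_num
    · rw [if_neg hk]
      have hnk : 0 ≤ -k := by omega
      rw [if_pos hnk]
      have hmm : ((Multiset.range (-k - 1).toNat).map fun j => -((j : ℤ) + 1)) =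
          ((Multiset.range (-k - 1).toNat).map fun j => ((j : ℤ) + 1)).map fun a => -a := by
        rw [Multiset.map_map]; simp
      rw [hmm, esymmM_neg]
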